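/- arXiv:1006.0265 — 5 statements merged into one kernel-verified Lean document; each statement's English description precedes it below -/
import Mathlib

section
/- Let L be an abelian group with no 2-torsion equipped with an action of G = Z/2. Then the natural map H^1(G,L) ∧ H^1(G,L) → H^2(G, L ∧ L) induced by the cup product (where ∧ denotes the quotient of the tensor product by elements ℓ ⊗ ℓ) is injective. -/
open TensorProduct

noncomputable section

/-- The subgroup of `L ⊗ L` generated by the squares `ℓ ⊗ ℓ`. -/
def sqSpan (L : Type*) [AddCommGroup L] : Submodule ℤ (L ⊗[ℤ] L) :=
  Submodule.span ℤ {z | ∃ x : L, z = x ⊗ₜ[ℤ] x}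

/-- `L ∧ L`, the quotient of `L ⊗ L` by the elements `ℓ ⊗ ℓ`. -/
abbrev Wedge (L : Type*) [AddCommGroup L] : Type _ :=
  (L ⊗[ℤ] L) ⧸ sqSpan L

/-- The wedge `x ∧ y` of two elements. -/
def wedgeOf {L : Type*} [AddCommGroup L] (x y : L) : Wedge L :=
  Submodule.Quotient.mk (x ⊗ₜ[ℤ] y)

/-- The involution induced on `L ∧ L` by an involution of `L`. -/
def wedgeMap {L : Type*} [AddCommGroup L] (τ : L →+ L) :
    Wedge L →+ Wedge L :=
  (Submodule.mapQ (sqSpan L) (sqSpan L)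
    (TensorProduct.map τ.toIntLinearMap τ.toIntLinearMap) (by
      unfold sqSpan
      rw [Submodule.span_le]
      rintro z ⟨x, rfl⟩
      refine Submodule.mem_comap.2 ?_
      first
        | exact Submodule.subset_span ⟨τ x, TensorProduct.map_tmul _ _ _ _⟩
        | (erw [TensorProduct.map_tmul]; exact Submodule.subset_span ⟨τ x, rfl⟩))).toAddMonoidHom

/-- The kernel of `1 + τ`. -/
def Kone {L : Type*} [AddCommGroup L] (τ : L →+ L) : AddSubgroup L :=
  (AddMonoidHom.id L + τ).ker

/-- The image of `1 − τ`. -/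
def Ione {L : Type*} [AddCommGroup L] (τ : L →+ L) : AddSubgroup L :=
  (AddMonoidHom.id L - τ).range

/-- `H¹(ℤ/2, L) = ker(1+τ)/im(1−τ)` for the `ℤ/2`-action generated by `τ`. -/
abbrev Hone {L : Type*} [AddCommGroup L] (τ : L →+ L) : Type _ :=
  Kone τ ⧸ ((Ione τ).addSubgroupOf (Kone τ))

/-- The class in `H¹` of an element of `ker(1+τ)`. -/
def honeMk {L : Type*} [AddCommGroup L] (τ : L →+ L) (x : L)
    (hx : x ∈ Kone τ) : Hone τ :=
  QuotientAddGroup.mk ⟨x, hx⟩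

/-- The kernel of `1 − τ`. -/
def Ktwo {L : Type*} [AddCommGroup L] (τ : L →+ L) : AddSubgroup L :=
  (AddMonoidHom.id L - τ).ker

/-- The image of `1 + τ`. -/
def Itwo {L : Type*} [AddCommGroup L] (τ : L →+ L) : AddSubgroup L :=
  (AddMonoidHom.id L + τ).range

/-- `H²(ℤ/2, L) = ker(1−τ)/im(1+τ)` for the `ℤ/2`-action generated by `τ`. -/
abbrev Htwo {L : Type*} [AddCommGroup L] (τ : L →+ L) : Type _ :=
  Ktwo τ ⧸ ((Itwo τ).addSubgroupOf (Ktwo τ))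

/-- The class in `H²` of an element of `ker(1−τ)`. -/
def htwoMk {L : Type*} [AddCommGroup L] (τ : L →+ L) (x : L)
    (hx : x ∈ Ktwo τ) : Htwo τ :=
  QuotientAddGroup.mk ⟨x, hx⟩


namespace WCaux

lemma zmod2_cases : ∀ r : ZMod 2, r = 0 ∨ r = 1 := by decide

lemma zmod2_add_self (a : ZMod 2) : a + a = 0 := by revert a; decide

lemma zmod2_eq_of_add_eq_zero {a b : ZMod 2} (h : a + b = 0) : a = b := by
  revert h; revert a b; decide

section General

variable {L : Type*} [AddCommGroup L]

lemma sq_mem (x : L) : x ⊗ₜ[ℤ] x ∈ sqSpan L := Submodule.subset_span ⟨x, rfl⟩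

lemma tmul_add_swap_mem (x y : L) : x ⊗ₜ[ℤ] y + y ⊗ₜ[ℤ] x ∈ sqSpan L := by
  have h : x ⊗ₜ[ℤ] y + y ⊗ₜ[ℤ] x =
      (x + y) ⊗ₜ[ℤ] (x + y) - x ⊗ₜ[ℤ] x - y ⊗ₜ[ℤ] y := by
    simp only [TensorProduct.add_tmul, TensorProduct.tmul_add]
    abel
  rw [h]
  exact sub_mem (sub_mem (sq_mem _) (sq_mem _)) (sq_mem _)

/-- The bilinear pairing `x ⊗ y ↦ f x * g y + g x * f y` on the integral tensor square. -/
def pairHom (f g : L →+ ZMod 2) : L ⊗[ℤ] L →ₗ[ℤ] ZMod 2 :=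
  TensorProduct.lift <| LinearMap.mk₂ ℤ (fun x y => f x * g y + g x * f y)
    (fun a b y => by simp only [map_add]; ring)
    (fun c a y => by simp only [map_zsmul, zsmul_eq_mul]; ring)
    (fun x a b => by simp only [map_add]; ring)
    (fun c x y => by simp only [map_zsmul, zsmul_eq_mul]; ring)

@[simp] lemma pairHom_tmul (f g : L →+ ZMod 2) (x y : L) :
    pairHom f g (x ⊗ₜ[ℤ] y) = f x * g y + g x * f y := by
  simp [pairHom]
  rfl

lemma symm_finset_sum_mem {ι : Type*} [DecidableEq ι] (v : ι → L) :
    ∀ (n : ℕ) (s : Finset (ι × ι)), s.card ≤ n →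
      (∀ i j, (i, j) ∈ s → (j, i) ∈ s) →
      (∑ p ∈ s, v p.1 ⊗ₜ[ℤ] v p.2) ∈ sqSpan L := by
  intro n
  induction n with
  | zero =>
    intro s hs _
    obtain rfl : s = ∅ := Finset.card_eq_zero.mp (Nat.le_zero.mp hs)
    simpa using zero_mem (sqSpan L)
  | succ n ih =>
    intro s hcard hsym
    rcases s.eq_empty_or_nonempty with rfl | ⟨⟨i, j⟩, hp⟩
    · simpa using zero_mem (sqSpan L)
    by_cases hij : i = j
    · subst hij
      rw [← Finset.sum_erase_add s _ hp]
      refine add_mem (ih _ ?_ ?_) (sq_mem _)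
      · have := Finset.card_erase_of_mem hp
        omega
      · intro k l hkl
        rcases Finset.mem_erase.mp hkl with ⟨hne, hmem⟩
        refine Finset.mem_erase.mpr ⟨?_, hsym _ _ hmem⟩
        intro h; apply hne
        obtain ⟨h1, h2⟩ := Prod.mk.injEq .. ▸ h
        simp [h1, h2]
    · have hq : (j, i) ∈ s := hsym i j hp
      have hq' : (j, i) ∈ s.erase (i, j) := by
        refine Finset.mem_erase.mpr ⟨?_, hq⟩
        simp [Prod.ext_iff]; intro h; exact fun h' => hij h.symm
      rw [← Finset.sum_erase_add s _ hp, ← Finset.sum_erase_add (s.erase (i, j)) _ hq',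
        add_assoc]
      refine add_mem (ih _ ?_ ?_) (tmul_add_swap_mem _ _)
      · have h1 : ((s.erase (i, j)).erase (j, i)).card ≤ (s.erase (i, j)).card :=
          Finset.card_le_card (Finset.erase_subset _ _)
        have h2 := Finset.card_erase_of_mem hp
        omega
      · intro k l hkl
        rcases Finset.mem_erase.mp hkl with ⟨hne1, hkl⟩
        rcases Finset.mem_erase.mp hkl with ⟨hne2, hmem⟩
        refine Finset.mem_erase.mpr ⟨?_, Finset.mem_erase.mpr ⟨?_, hsym _ _ hmem⟩⟩
        · simp only [Ne, Prod.ext_iff] at hne2 ⊢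
          tauto
        · simp only [Ne, Prod.ext_iff] at hne1 ⊢
          tauto

end General

section Mod2

variable {V : Type*} [AddCommGroup V] [Module (ZMod 2) V]

/-- The canonical map from the integral tensor square to the `ZMod 2` tensor square. -/
def fwd : V ⊗[ℤ] V →ₗ[ℤ] V ⊗[ZMod 2] V :=
  TensorProduct.lift <| LinearMap.mk₂ ℤ (fun x y => x ⊗ₜ[ZMod 2] y)
    (fun a b y => TensorProduct.add_tmul a b y)
    (fun c a y => ((TensorProduct.mk (ZMod 2) V V).flip y).toAddMonoidHom.map_zsmul c a)
    (fun x a b => TensorProduct.tmul_add x a b)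
    (fun c x y => ((TensorProduct.mk (ZMod 2) V V) x).toAddMonoidHom.map_zsmul c y)

@[simp] lemma fwd_tmul (x y : V) : fwd (x ⊗ₜ[ℤ] y) = x ⊗ₜ[ZMod 2] y := by
  simp [fwd]
  rfl

def mkAdd : V →+ V →+ V ⊗[ℤ] V where
  toFun x := ((TensorProduct.mk ℤ V V) x).toAddMonoidHom
  map_zero' := by ext y; simp
  map_add' a b := by ext y; simp [TensorProduct.add_tmul]

/-- A retraction from the `ZMod 2` tensor square to the integral tensor square. -/
def gv : V ⊗[ZMod 2] V →+ V ⊗[ℤ] V :=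
  TensorProduct.liftAddHom mkAdd (by
    intro r m n
    rcases zmod2_cases r with h | h <;> subst h <;> simp [mkAdd])

@[simp] lemma gv_tmul (x y : V) : gv (x ⊗ₜ[ZMod 2] y) = x ⊗ₜ[ℤ] y := by
  simp [gv, mkAdd]

lemma gv_fwd (t : V ⊗[ℤ] V) : gv (fwd t) = t := by
  induction t using TensorProduct.induction_on with
  | zero => simp
  | tmul x y => simp
  | add a b ha hb => rw [map_add, map_add, ha, hb]

lemma fwd_injective : Function.Injective (fwd (V := V)) :=
  Function.LeftInverse.injective gv_fwd

/-- The `ZMod 2`-bilinear pairing. -/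
def pair2 (φ χ : V →ₗ[ZMod 2] ZMod 2) : V ⊗[ZMod 2] V →ₗ[ZMod 2] ZMod 2 :=
  TensorProduct.lift <| LinearMap.mk₂ (ZMod 2) (fun x y => φ x * χ y + χ x * φ y)
    (fun a b y => by simp only [map_add]; ring)
    (fun c a y => by simp only [map_smul, smul_eq_mul]; ring)
    (fun x a b => by simp only [map_add]; ring)
    (fun c x y => by simp only [map_smul, smul_eq_mul]; ring)

@[simp] lemma pair2_tmul (φ χ : V →ₗ[ZMod 2] ZMod 2) (x y : V) :
    pair2 φ χ (x ⊗ₜ[ZMod 2] y) = φ x * χ y + χ x * φ y := by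
  simp [pair2]

lemma pairHom_eq_pair2 (φ χ : V →ₗ[ZMod 2] ZMod 2) (t : V ⊗[ℤ] V) :
    pairHom φ.toAddMonoidHom χ.toAddMonoidHom t = pair2 φ χ (fwd t) := by
  induction t using TensorProduct.induction_on with
  | zero => simp
  | tmul x y => simp
  | add a b ha hb => rw [map_add, map_add, map_add, ha, hb]

end Mod2

/-- Separation lemma: a tensor killed by all pairings `f ∧ g` lies in `sqSpan`. -/
theorem mem_sqSpan_of_pairs_vanish {W : Type*} [AddCommGroup W]
    (hW : ∀ v : W, v + v = 0) (t : W ⊗[ℤ] W)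
    (h : ∀ f g : W →+ ZMod 2, pairHom f g t = 0) : t ∈ sqSpan W := by
  classical
  letI : Module (ZMod 2) W := AddCommGroup.zmodModule (n := 2) (by
    intro x; rw [two_nsmul]; exact hW x)
  set b := Module.Basis.ofVectorSpace (ZMod 2) W with hb
  set c := (Module.Basis.tensorProduct b b).repr (fwd t) with hc
  -- symmetry of the coordinates
  have hsymm : ∀ i j, c (i, j) = c (j, i) := by
    intro i j
    rcases eq_or_ne i j with rfl | hij
    · rfl
    have h0 := h (b.coord i).toAddMonoidHom (b.coord j).toAddMonoidHom
    rw [pairHom_eq_pair2] at h0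
    have hF : pair2 (b.coord i) (b.coord j) =
        (Module.Basis.tensorProduct b b).coord (i, j) + (Module.Basis.tensorProduct b b).coord (j, i) := by
      apply (Module.Basis.tensorProduct b b).ext
      rintro ⟨k, l⟩
      simp only [Module.Basis.tensorProduct_apply, pair2_tmul, LinearMap.add_apply,
        Module.Basis.coord_apply, Module.Basis.tensorProduct_repr_tmul_apply, Module.Basis.repr_self,
        Finsupp.single_apply, smul_eq_mul]
      by_cases h1 : k = i <;> by_cases h2 : l = j <;> by_cases h3 : k = j <;>
        by_cases h4 : l = i <;> simp_all
    rw [hF] at h0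
    simp only [LinearMap.add_apply, Module.Basis.coord_apply, ← hc] at h0
    exact zmod2_eq_of_add_eq_zero h0
  -- the support of `c` is symmetric
  have hsupp : ∀ i j, ((i, j) : _ × _) ∈ c.support → ((j, i) : _ × _) ∈ c.support := by
    intro i j hij
    rw [Finsupp.mem_support_iff] at hij ⊢
    rwa [← hsymm]
  have hone : ∀ p ∈ c.support, c p = 1 := by
    intro p hp
    rcases zmod2_cases (c p) with h0 | h1
    · exact absurd h0 (Finsupp.mem_support_iff.mp hp)
    · exact h1
  -- reconstruction of `t` from its coordinates
  have hfu : fwd (∑ p ∈ c.support, (b p.1 : W) ⊗ₜ[ℤ] (b p.2 : W)) = fwd t := by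
    rw [map_sum]
    have he : ∀ p ∈ c.support, fwd ((b p.1 : W) ⊗ₜ[ℤ] (b p.2 : W)) =
        c p • (Module.Basis.tensorProduct b b) p := by
      intro p hp
      rw [fwd_tmul, hone p hp, one_smul, ← Module.Basis.tensorProduct_apply']
    rw [Finset.sum_congr rfl he]
    have hlc := Module.Basis.linearCombination_repr (Module.Basis.tensorProduct b b) (fwd t)
    rw [← hc] at hlc
    rw [← hlc, Finsupp.linearCombination_apply, Finsupp.sum]
  have ht : t = ∑ p ∈ c.support, (b p.1 : W) ⊗ₜ[ℤ] (b p.2 : W) := fwd_injective hfu.symm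
  rw [ht]
  exact symm_finset_sum_mem (fun i => (b i : W)) c.support.card c.support le_rfl
    (fun i j hij => hsupp i j hij)

section Main

variable {L : Type*} [AddCommGroup L] (τ : L →+ L)

lemma mem_Kone_iff {x : L} : x ∈ Kone τ ↔ x + τ x = 0 := Iff.rfl

lemma tau_eq_neg {x : L} (hx : x ∈ Kone τ) : τ x = -x :=
  eq_neg_of_add_eq_zero_right hx

lemma Ione_le_Kone (hτ : ∀ x, τ (τ x) = x) : Ione τ ≤ Kone τ := by
  rintro _ ⟨y, rfl⟩
  show ((AddMonoidHom.id L - τ) y) + τ ((AddMonoidHom.id L - τ) y) = 0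
  simp only [AddMonoidHom.sub_apply, AddMonoidHom.id_apply, map_sub, hτ]
  abel

lemma hone_add_self (v : Hone τ) : v + v = 0 := by
  obtain ⟨x, rfl⟩ := QuotientAddGroup.mk_surjective v
  rw [← QuotientAddGroup.mk_add, QuotientAddGroup.eq_zero_iff,
    AddSubgroup.mem_addSubgroupOf]
  refine ⟨(x : L), ?_⟩
  show (x : L) - τ (x : L) = ((x + x : Kone τ) : L)
  rw [tau_eq_neg τ x.2, sub_neg_eq_add]
  rfl

lemma extension (hτ : ∀ x, τ (τ x) = x) (htor : ∀ x : L, x + x = 0 → x = 0)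
    (φ : Hone τ →+ ZMod 2) :
    ∃ f : L →+ ZMod 2, (∀ x (hx : x ∈ Kone τ), f x = φ (honeMk τ x hx)) ∧
      ∀ x, f (τ x) = f x := by
  classical
  set J : AddSubgroup L := Ione τ ⊔ (AddMonoidHom.id L + AddMonoidHom.id L).range with hJ
  have h2J : ∀ x : L, x + x ∈ J := fun x => AddSubgroup.mem_sup_right ⟨x, rfl⟩
  have hIJ : Ione τ ≤ J := le_sup_left
  letI : Module (ZMod 2) (L ⧸ J) := QuotientAddGroup.zmodModule (n := 2) (by
    intro x; rw [two_nsmul]; exact h2J x)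
  letI : Module (ZMod 2) (Hone τ) := AddCommGroup.zmodModule (n := 2) (by
    intro v; rw [two_nsmul]; exact hone_add_self τ v)
  let p0 : Kone τ →+ L ⧸ J := (QuotientAddGroup.mk' J).comp (Kone τ).subtype
  have hp0 : ∀ x ∈ (Ione τ).addSubgroupOf (Kone τ), p0 x = 0 := by
    intro x hx
    have hxJ : (x : L) ∈ J := hIJ ((AddSubgroup.mem_addSubgroupOf).mp hx)
    show ((x : L) : L ⧸ J) = 0
    rwa [QuotientAddGroup.eq_zero_iff]
  let p : Hone τ →+ L ⧸ J := QuotientAddGroup.lift _ p0 hp0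
  have hpmk : ∀ (x : L) (hx : x ∈ Kone τ), p (honeMk τ x hx) = ((x : L) : L ⧸ J) :=
    fun _ _ => rfl
  have hpinj : Function.Injective p := by
    rw [injective_iff_map_eq_zero]
    intro v hv
    obtain ⟨x, rfl⟩ := QuotientAddGroup.mk_surjective v
    have hxJ0 : ((x : L) : L ⧸ J) = 0 := hv
    have hxJ : (x : L) ∈ J := by rwa [QuotientAddGroup.eq_zero_iff] at hxJ0
    rw [hJ, AddSubgroup.mem_sup] at hxJ
    obtain ⟨y, hy, z, ⟨u, rfl⟩, hyz⟩ := hxJ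
    have hyK : y ∈ Kone τ := Ione_le_Kone τ hτ hy
    have huu : ((AddMonoidHom.id L + AddMonoidHom.id L) u) ∈ Kone τ := by
      have hxK : (x : L) ∈ Kone τ := x.2
      have hsub : ((x : L) - y) ∈ Kone τ := sub_mem hxK hyK
      rwa [← hyz, add_sub_cancel_left] at hsub
    have huK : u ∈ Kone τ := by
      rw [mem_Kone_iff] at huu ⊢
      apply htor
      rw [AddMonoidHom.add_apply, AddMonoidHom.id_apply, map_add] at huu
      calc (u + τ u) + (u + τ u) = (u + u) + (τ u + τ u) := by abel
        _ = 0 := huu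
    have huI : (AddMonoidHom.id L + AddMonoidHom.id L) u ∈ Ione τ := ⟨u, by
      show u - τ u = _
      rw [tau_eq_neg τ huK, sub_neg_eq_add]
      rfl⟩
    have hxI : (x : L) ∈ Ione τ := by
      rw [← hyz]; exact add_mem hy huI
    rw [QuotientAddGroup.eq_zero_iff]
    exact (AddSubgroup.mem_addSubgroupOf).mpr hxI
  have hker : LinearMap.ker (AddMonoidHom.toZModLinearMap 2 p) = ⊥ := by
    rw [LinearMap.ker_eq_bot]
    exact hpinj
  obtain ⟨g, hg⟩ := LinearMap.exists_leftInverse_of_injective _ hker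
  refine ⟨(((AddMonoidHom.toZModLinearMap 2 φ).comp g).toAddMonoidHom).comp
      (QuotientAddGroup.mk' J), ?_, ?_⟩
  · intro x hx
    have hgp : g (((x : L) : L ⧸ J)) = honeMk τ x hx := by
      have h1 := congrArg (fun m => m (honeMk τ x hx)) hg
      simpa [hpmk x hx] using h1
    simp [hgp]
  · intro x
    have hmk : ((τ x : L) : L ⧸ J) = ((x : L) : L ⧸ J) := by
      rw [QuotientAddGroup.eq_iff_sub_mem]
      have : x - τ x ∈ Ione τ := ⟨x, rfl⟩
      have h1 : x - τ x ∈ J := hIJ this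
      simpa using neg_mem h1
    simp [hmk]

lemma wedgeMap_mk (t : L ⊗[ℤ] L) :
    wedgeMap τ (Submodule.Quotient.mk t) =
      Submodule.Quotient.mk (TensorProduct.map τ.toIntLinearMap τ.toIntLinearMap t) := rfl

lemma pairHom_map (f g : L →+ ZMod 2) (hf : ∀ x, f (τ x) = f x) (hg : ∀ x, g (τ x) = g x)
    (t : L ⊗[ℤ] L) :
    pairHom f g (TensorProduct.map τ.toIntLinearMap τ.toIntLinearMap t) = pairHom f g t := by
  induction t using TensorProduct.induction_on with
  | zero => simp
  | tmul x y => simp [hf, hg]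
  | add a b ha hb => rw [map_add, map_add, map_add, ha, hb]

/-- The induced functional on the wedge. -/
def wedgePair (f g : L →+ ZMod 2) : Wedge L →ₗ[ℤ] ZMod 2 :=
  Submodule.liftQ (sqSpan L) (pairHom f g) (by
    rw [sqSpan, Submodule.span_le]
    rintro z ⟨x, rfl⟩
    simp only [SetLike.mem_coe, LinearMap.mem_ker, pairHom_tmul]
    rw [mul_comm (g x) (f x)]
    exact zmod2_add_self _)

@[simp] lemma wedgePair_mk (f g : L →+ ZMod 2) (t : L ⊗[ℤ] L) :
    wedgePair f g (Submodule.Quotient.mk t) = pairHom f g t := rfl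

/-- The induced functional on `H²`. -/
def htwoPair (f g : L →+ ZMod 2) (hf : ∀ x, f (τ x) = f x) (hg : ∀ x, g (τ x) = g x) :
    Htwo (wedgeMap τ) →+ ZMod 2 :=
  QuotientAddGroup.lift _
    ((wedgePair f g).toAddMonoidHom.comp (Ktwo (wedgeMap τ)).subtype) (by
      rintro ⟨m, hm⟩ hmem
      rw [AddSubgroup.mem_addSubgroupOf] at hmem
      obtain ⟨u, hu⟩ := hmem
      obtain ⟨s, rfl⟩ := Submodule.Quotient.mk_surjective _ u
      show wedgePair f g m = 0
      have hu' : (AddMonoidHom.id (Wedge L) + wedgeMap τ) (Submodule.Quotient.mk s) = m := hu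
      rw [← hu', AddMonoidHom.add_apply, AddMonoidHom.id_apply, map_add, wedgeMap_mk,
        wedgePair_mk, wedgePair_mk, pairHom_map τ f g hf hg]
      exact zmod2_add_self _)

lemma mk_tmul_mem_Ktwo (hτ : ∀ x, τ (τ x) = x) {w₁ w₂ : L}
    (h₁ : w₁ ∈ Kone τ) (h₂ : w₂ ∈ Kone τ) :
    (Submodule.Quotient.mk (w₁ ⊗ₜ[ℤ] (τ w₂)) : Wedge L) ∈ Ktwo (wedgeMap τ) := by
  rw [Ktwo, AddMonoidHom.mem_ker]
  rw [AddMonoidHom.sub_apply, AddMonoidHom.id_apply, sub_eq_zero, wedgeMap_mk]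
  congr 1
  rw [TensorProduct.map_tmul]
  simp only [AddMonoidHom.coe_toIntLinearMap]
  rw [hτ, tau_eq_neg τ h₁, tau_eq_neg τ h₂]
  simp [TensorProduct.neg_tmul, TensorProduct.tmul_neg]

end Main

end WCaux

/-- Let `L` be an abelian group with no 2-torsion, with a `ℤ/2`-action
generated by an involution `τ`.  Then the natural map
`H¹(ℤ/2,L) ∧ H¹(ℤ/2,L) → H²(ℤ/2, L ∧ L)` induced by the cup product — i.e. any
additive map `Φ` satisfying `Φ([w₁] ∧ [w₂]) = [w₁ ⊗ τ w₂]` — is injective. -/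
theorem wedge_cup_injective_of_no_two_torsion
    (L : Type*) [AddCommGroup L]
    (τ : L →+ L) (hτ : ∀ x, τ (τ x) = x)
    (htor : ∀ x : L, x + x = 0 → x = 0)
    (Φ : Wedge (Hone τ) →+ Htwo (wedgeMap τ))
    (hΦ : ∀ (w₁ w₂ : L) (h₁ : w₁ ∈ Kone τ) (h₂ : w₂ ∈ Kone τ)
      (hm : (Submodule.Quotient.mk (w₁ ⊗ₜ[ℤ] (τ w₂)) : Wedge L) ∈ Ktwo (wedgeMap τ)),
      Φ (wedgeOf (honeMk τ w₁ h₁) (honeMk τ w₂ h₂)) =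
        htwoMk (wedgeMap τ) _ hm) :
    Function.Injective Φ := by
  classical
  rw [injective_iff_map_eq_zero]
  intro w hw
  obtain ⟨t, rfl⟩ := Submodule.Quotient.mk_surjective _ w
  rw [Submodule.Quotient.mk_eq_zero]
  apply WCaux.mem_sqSpan_of_pairs_vanish (WCaux.hone_add_self τ)
  intro φ χ
  obtain ⟨f, hf1, hf2⟩ := WCaux.extension τ hτ htor φ
  obtain ⟨g, hg1, hg2⟩ := WCaux.extension τ hτ htor χ
  have key : ∀ s : Hone τ ⊗[ℤ] Hone τ,
      WCaux.pairHom φ χ s =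
        WCaux.htwoPair τ f g hf2 hg2 (Φ (Submodule.Quotient.mk s)) := by
    intro s
    induction s using TensorProduct.induction_on with
    | zero => simp
    | add a b ha hb =>
      rw [map_add, Submodule.Quotient.mk_add, map_add, map_add, ha, hb]
    | tmul u v =>
      obtain ⟨x, rfl⟩ := QuotientAddGroup.mk_surjective u
      obtain ⟨y, rfl⟩ := QuotientAddGroup.mk_surjective v
      obtain ⟨w₁, h₁⟩ := x
      obtain ⟨w₂, h₂⟩ := y
      have hm := WCaux.mk_tmul_mem_Ktwo τ hτ h₁ h₂
      have hwedge : (Submodule.Quotient.mk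
          ((QuotientAddGroup.mk ⟨w₁, h₁⟩ : Hone τ) ⊗ₜ[ℤ]
            (QuotientAddGroup.mk ⟨w₂, h₂⟩ : Hone τ)) : Wedge (Hone τ)) =
          wedgeOf (honeMk τ w₁ h₁) (honeMk τ w₂ h₂) := rfl
      rw [hwedge, hΦ w₁ w₂ h₁ h₂ hm]
      have hpair : WCaux.htwoPair τ f g hf2 hg2 (htwoMk (wedgeMap τ) _ hm) =
          WCaux.wedgePair f g (Submodule.Quotient.mk (w₁ ⊗ₜ[ℤ] (τ w₂))) := rfl
      rw [hpair, WCaux.wedgePair_mk, WCaux.pairHom_tmul, WCaux.pairHom_tmul,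
        hf2 w₂, hg2 w₂, hf1 w₁ h₁, hg1 w₁ h₁, hf1 w₂ h₂, hg1 w₂ h₂]
      rfl
  rw [key t, hw, map_zero]

end
end

section
/- Let 1 → π → π̃ → G → 1 be an extension of (profinite) groups equipped with a splitting, and let δ_2 : H^1(G, π/[π]_2) → H^2(G, [π]_2/[π]_3) be the boundary map of the central extension 1 → [π]_2/[π]_3 → π/[π]_3 → π/[π]_2 → 1 (with G acting via the splitting). Then for all x, y in H^1(G, π/[π]_2), δ_2(x+y) = δ_2(x) + δ_2(y) + [−,−]_*(x ∪ y), where [−,−] : π/[π]_2 ⊗ π/[π]_2 → [π]_2/[π]_3 is the commutator pairing. -/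
open scoped commutatorElement

section Aux

variable {Q : Type*} [Group Q]

private lemma aux_drop_left (p q z : Q) (hz : ∀ r : Q, z * r = r * z) :
    ⁅p * z, q⁆ = ⁅p, q⁆ := by
  calc ⁅p * z, q⁆ = p * (z * q) * z⁻¹ * p⁻¹ * q⁻¹ := by
        rw [commutatorElement_def]; group
    _ = p * (q * z) * z⁻¹ * p⁻¹ * q⁻¹ := by rw [hz q]
    _ = ⁅p, q⁆ := by rw [commutatorElement_def]; group

private lemma aux_drop_right (p q z : Q) (hz : ∀ r : Q, z * r = r * z) :
    ⁅p, q * z⁆ = ⁅p, q⁆ := by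
  rw [← commutatorElement_inv, aux_drop_left q p z hz]
  exact commutatorElement_inv q p

private lemma aux_mul_left (hc : ∀ p q r : Q, ⁅p, q⁆ * r = r * ⁅p, q⁆)
    (p q r : Q) : ⁅p * q, r⁆ = ⁅p, r⁆ * ⁅q, r⁆ := by
  calc ⁅p * q, r⁆ = (p * ⁅q, r⁆) * (r * p⁻¹ * r⁻¹) := by
        rw [commutatorElement_def, commutatorElement_def]; group
    _ = (⁅q, r⁆ * p) * (r * p⁻¹ * r⁻¹) := by rw [hc q r p]
    _ = ⁅q, r⁆ * ⁅p, r⁆ := by rw [commutatorElement_def p r]; group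
    _ = ⁅p, r⁆ * ⁅q, r⁆ := by rw [hc q r ⁅p, r⁆]

private lemma aux_mul_right (hc : ∀ p q r : Q, ⁅p, q⁆ * r = r * ⁅p, q⁆)
    (p q r : Q) : ⁅p, q * r⁆ = ⁅p, q⁆ * ⁅p, r⁆ := by
  rw [← commutatorElement_inv, aux_mul_left hc q r p, mul_inv_rev,
    commutatorElement_inv, commutatorElement_inv]
  rw [hc p r ⁅p, q⁆]

private lemma aux_final (A B C D P : Q) (hAD : A * D = D * A) :
    P * A * (B * ((C * A) * (D⁻¹ * B))⁻¹ * C) * (P * D)⁻¹ = 1 := by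
  calc P * A * (B * ((C * A) * (D⁻¹ * B))⁻¹ * C) * (P * D)⁻¹
      = P * (A * D) * (A⁻¹ * (D⁻¹ * P⁻¹)) := by group
    _ = P * (D * A) * (A⁻¹ * (D⁻¹ * P⁻¹)) := by rw [hAD]
    _ = 1 := by group

private lemma zarhin_aux (a b c d X Y e₁ e₂ : Q)
    (hc : ∀ p q r : Q, ⁅p, q⁆ * r = r * ⁅p, q⁆)
    (h1 : ∀ r : Q, e₁ * r = r * e₁) (h2 : ∀ r : Q, e₂ * r = r * e₂)
    (hX : X⁻¹ * (a * c) = e₁) (hY : Y⁻¹ * (b * d) = e₂) :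
    (a * c * X⁻¹) * (b * d * Y⁻¹) * ⁅a, d⁆ * (⁅c, d⁆ * ⁅X, Y⁆⁻¹ * ⁅a, b⁆) *
      ((a * b) * (c * d) * (X * Y)⁻¹)⁻¹ = 1 := by
  have h1' : ∀ r : Q, e₁⁻¹ * r = r * e₁⁻¹ := by
    intro r
    calc e₁⁻¹ * r = e₁⁻¹ * (r * e₁) * e₁⁻¹ := by group
      _ = e₁⁻¹ * (e₁ * r) * e₁⁻¹ := by rw [h1 r]
      _ = r * e₁⁻¹ := by group
  have h2' : ∀ r : Q, e₂⁻¹ * r = r * e₂⁻¹ := by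
    intro r
    calc e₂⁻¹ * r = e₂⁻¹ * (r * e₂) * e₂⁻¹ := by group
      _ = e₂⁻¹ * (e₂ * r) * e₂⁻¹ := by rw [h2 r]
      _ = r * e₂⁻¹ := by group
  have hXe : X = (a * c) * e₁⁻¹ := by rw [← hX]; group
  have hYe : Y = (b * d) * e₂⁻¹ := by rw [← hY]; group
  have hs1 : a * c * X⁻¹ = e₁ := by
    calc a * c * X⁻¹ = (a * c) * e₁ * (a * c)⁻¹ := by rw [hXe]; group
      _ = e₁ * (a * c) * (a * c)⁻¹ := by rw [h1 (a * c)]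
      _ = e₁ := by group
  have hs2 : b * d * Y⁻¹ = e₂ := by
    calc b * d * Y⁻¹ = (b * d) * e₂ * (b * d)⁻¹ := by rw [hYe]; group
      _ = e₂ * (b * d) * (b * d)⁻¹ := by rw [h2 (b * d)]
      _ = e₂ := by group
  have hXY : ⁅X, Y⁆ = ⁅a, b⁆ * ⁅a, d⁆ * (⁅c, b⁆ * ⁅c, d⁆) := by
    rw [hXe, hYe, aux_drop_left _ _ _ h1', aux_drop_right _ _ _ h2',
      aux_mul_left hc, aux_mul_right hc, aux_mul_right hc]
  have hT : (a * b) * (c * d) * (X * Y)⁻¹ = e₁ * e₂ * ⁅b, c⁆ := by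
    calc (a * b) * (c * d) * (X * Y)⁻¹
        = (a * b * c * d) * e₂ * (d⁻¹ * b⁻¹ * (e₁ * (c⁻¹ * a⁻¹))) := by
          rw [hXe, hYe]; group
      _ = e₂ * (a * b * c * d) * (d⁻¹ * b⁻¹ * (e₁ * (c⁻¹ * a⁻¹))) := by
          rw [h2 (a * b * c * d)]
      _ = (e₂ * (a * b * c * b⁻¹)) * e₁ * (c⁻¹ * a⁻¹) := by group
      _ = e₁ * (e₂ * (a * b * c * b⁻¹)) * (c⁻¹ * a⁻¹) := by
          rw [← h1 (e₂ * (a * b * c * b⁻¹))]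
      _ = e₁ * e₂ * (a * ⁅b, c⁆ * a⁻¹) := by rw [commutatorElement_def]; group
      _ = e₁ * e₂ * (⁅b, c⁆ * a * a⁻¹) := by rw [hc b c a]
      _ = e₁ * e₂ * ⁅b, c⁆ := by group
  rw [hs1, hs2, hXY, hT,
    show ⁅c, b⁆ = ⁅b, c⁆⁻¹ from (commutatorElement_inv b c).symm]
  exact aux_final ⁅a, d⁆ ⁅c, d⁆ ⁅a, b⁆ ⁅b, c⁆ (e₁ * e₂) (hc a d ⁅b, c⁆)

end Aux

/-- Zarhin's formula `δ₂(x+y) = δ₂(x) + δ₂(y) + [−,−]_*(x ∪ y)`.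

A split extension `1 → π → π̃ → G → 1` is encoded by the induced action of `G`
on `π` by automorphisms (`MulDistribMulAction`).  A class in `H¹(G, π/[π]₂)` is
represented by a map `x : G → π` which is a twisted cocycle modulo
`[π]₂ = lowerCentralSeries π 1`.  A lift of `δ₂` on such an `x` is represented
by the `[π]₂`-valued 2-cocycle `D x (g,h) = x g · (g • x h) · x (g h)⁻¹`, whose
class in `H²(G, [π]₂/[π]₃)` is `δ₂[x]` (here `[π]₃ = lowerCentralSeries π 2`).

The theorem: for cocycles `x, y` (and `x·y` representing `[x]+[y]`), there is a
`[π]₂`-valued 1-cochain `f`, with coboundary `∂f (g,h) = (g • f h) · f (g h)⁻¹ · f g`,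
such that `D x · D y · ⁅x g, g • y h⁆ · ∂f = D (x·y)` modulo `[π]₃`; that is,
`δ₂` is quadratic with associated bilinear form the commutator cup product. -/
theorem zarhin_delta_two_quadratic
    (G π : Type*) [Group G] [Group π] [MulDistribMulAction G π]
    (x y : G → π)
    (hx : ∀ g h : G, (x (g * h))⁻¹ * (x g * g • x h) ∈ (⊤ : Subgroup π).lowerCentralSeries 1)
    (hy : ∀ g h : G, (y (g * h))⁻¹ * (y g * g • y h) ∈ (⊤ : Subgroup π).lowerCentralSeries 1) :
    ∃ f : G → π, (∀ g, f g ∈ (⊤ : Subgroup π).lowerCentralSeries 1) ∧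
      ∀ g h : G,
        (x g * g • x h * (x (g * h))⁻¹) *
          (y g * g • y h * (y (g * h))⁻¹) *
          ⁅x g, g • y h⁆ *
          ((g • f h) * (f (g * h))⁻¹ * f g) *
          ((x g * y g) * (g • (x h * y h)) * ((x (g * h)) * y (g * h))⁻¹)⁻¹
          ∈ (⊤ : Subgroup π).lowerCentralSeries 2 := by
  refine ⟨fun g => ⁅x g, y g⁆, fun g =>
    Subgroup.commutator_mem_commutator (Subgroup.mem_top _) (Subgroup.mem_top _),
    fun g h => ?_⟩
  set N := (⊤ : Subgroup π).lowerCentralSeries 2 with hN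
  have hsmul : ∀ (g : G) (p q : π), g • ⁅p, q⁆ = ⁅g • p, g • q⁆ := by
    intro g p q
    simp [commutatorElement_def, smul_mul', smul_inv']
  -- push into the quotient Q = π / [π]₃
  refine (QuotientGroup.eq_one_iff _).mp ?_
  have mkC : ∀ p q : π, ((⁅p, q⁆ : π) : π ⧸ N) = ⁅(p : π ⧸ N), (q : π ⧸ N)⁆ := by
    intro p q
    exact map_commutatorElement (QuotientGroup.mk' N) p q
  have hcent : ∀ z : π, z ∈ (⊤ : Subgroup π).lowerCentralSeries 1 → ∀ r : π ⧸ N,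
      (z : π ⧸ N) * r = r * (z : π ⧸ N) := by
    intro z hz r
    obtain ⟨w, rfl⟩ := QuotientGroup.mk_surjective r
    have hmem : ⁅z, w⁆ ∈ N :=
      Subgroup.commutator_mem_commutator hz (Subgroup.mem_top w)
    have h2 : ⁅(z : π ⧸ N), (w : π ⧸ N)⁆ = 1 := by
      rw [← mkC]; exact (QuotientGroup.eq_one_iff _).mpr hmem
    exact commutatorElement_eq_one_iff_mul_comm.mp h2
  have hc : ∀ p q r : π ⧸ N, ⁅p, q⁆ * r = r * ⁅p, q⁆ := by
    intro p q r
    obtain ⟨p', rfl⟩ := QuotientGroup.mk_surjective p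
    obtain ⟨q', rfl⟩ := QuotientGroup.mk_surjective q
    rw [← mkC]
    exact hcent _ (Subgroup.commutator_mem_commutator (Subgroup.mem_top p')
      (Subgroup.mem_top q')) r
  have main := zarhin_aux ((x g : π) : π ⧸ N) (y g : π) ((g • x h : π) : π ⧸ N)
    ((g • y h : π) : π ⧸ N) ((x (g * h) : π) : π ⧸ N) ((y (g * h) : π) : π ⧸ N)
    (((x (g * h))⁻¹ * (x g * g • x h) : π) : π ⧸ N)
    (((y (g * h))⁻¹ * (y g * g • y h) : π) : π ⧸ N)
    hc (hcent _ (hx g h)) (hcent _ (hy g h))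
    (by simp [QuotientGroup.mk_mul, QuotientGroup.mk_inv])
    (by simp [QuotientGroup.mk_mul, QuotientGroup.mk_inv])
  rw [hsmul, smul_mul']
  simpa only [QuotientGroup.mk_mul, QuotientGroup.mk_inv, mkC] using main
end

section
/- Let 1 → N → E → G → 1 be a group extension and s : G → E/[N]_2 a section of the pushout extension 1 → N/[N]_2 → E/[N]_2 → G → 1. Then s lifts (up to conjugacy) to a section of 1 → N/[N]_3 → E/[N]_3 → G → 1 if and only if the pullback along s of the central extension 1 → [N]_2/[N]_3 → N/[N]_3 ×_{N/[N]_2} (E/[N]_2) → E/[N]_2 → 1 splits over G. -/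
section

variable {E : Type*} [Group E] (N : Subgroup E) [N.Normal]

/-- The image of `[N]₂ = lowerCentralSeries N 1` in `E`. -/
def lcsTwo : Subgroup E := ((⊤ : Subgroup N).lowerCentralSeries 1).map N.subtype

/-- The image of `[N]₃ = lowerCentralSeries N 2` in `E`. -/
def lcsThree : Subgroup E := ((⊤ : Subgroup N).lowerCentralSeries 2).map N.subtype

end

/-- Let `1 → N → E → G → 1` be a group extension (with
`G = E/N`), and let `s : G → E/[N]₂` be a section of the pushout extension
`1 → N/[N]₂ → E/[N]₂ → G → 1`.  Then `s` lifts, up to conjugacy by an element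
of `N/[N]₂`, to a section of `1 → N/[N]₃ → E/[N]₃ → G → 1` if and only if the
pullback along `s` of the central extension
`1 → [N]₂/[N]₃ → E/[N]₃ → E/[N]₂ → 1` splits over `G`, i.e. there is a
homomorphism `σ : G →* E/[N]₃` with `p₃₂ ∘ σ = s` (equivalently, a splitting
`g ↦ (σ g, g)` of the fibered product). -/
theorem section_lifts_iff_pullback_splits
    {E : Type*} [Group E] (N : Subgroup E) [N.Normal]
    [h2 : (lcsTwo N).Normal] [h3 : (lcsThree N).Normal]
    (h32 : lcsThree N ≤ lcsTwo N) (hN2 : lcsTwo N ≤ N)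
    -- the projections `E/[N]₃ → E/[N]₂`, `E/[N]₂ → G = E/N`, `E/[N]₃ → G`
    (p32 : E ⧸ lcsThree N →* E ⧸ lcsTwo N)
    (hp32 : ∀ e : E, p32 (QuotientGroup.mk e) = QuotientGroup.mk e)
    (pG2 : E ⧸ lcsTwo N →* E ⧸ N)
    (hpG2 : ∀ e : E, pG2 (QuotientGroup.mk e) = QuotientGroup.mk e)
    (pG3 : E ⧸ lcsThree N →* E ⧸ N)
    (hpG3 : ∀ e : E, pG3 (QuotientGroup.mk e) = QuotientGroup.mk e)
    -- `s` is a section of `E/[N]₂ → G`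
    (s : E ⧸ N →* E ⧸ lcsTwo N) (hs : ∀ g : E ⧸ N, pG2 (s g) = g) :
    -- `s` lifts to a section of `E/[N]₃ → G` up to conjugacy by `N/[N]₂`
    (∃ t : E ⧸ N →* E ⧸ lcsThree N, (∀ g, pG3 (t g) = g) ∧
      ∃ ν : E ⧸ lcsTwo N, ν ∈ N.map (QuotientGroup.mk' (lcsTwo N)) ∧
        ∀ g, p32 (t g) = ν * s g * ν⁻¹) ↔
    -- the pullback along `s` of the central extension splits over `G`
    (∃ σ : E ⧸ N →* E ⧸ lcsThree N, ∀ g, p32 (σ g) = s g) := by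
  have hG32 : ∀ x : E ⧸ lcsThree N, pG3 x = pG2 (p32 x) := by
    intro x
    induction x using QuotientGroup.induction_on with
    | H e => rw [hpG3, hp32, hpG2]
  constructor
  · rintro ⟨t, ht, ν, hν, hconj⟩
    obtain ⟨n, hn, rfl⟩ := hν
    refine ⟨((MulAut.conj ((QuotientGroup.mk n : E ⧸ lcsThree N))⁻¹).toMonoidHom).comp t, ?_⟩
    intro g
    have : p32 ((QuotientGroup.mk n : E ⧸ lcsThree N)) = QuotientGroup.mk n := hp32 n
    simp only [MonoidHom.comp_apply, MulEquiv.coe_toMonoidHom, MulAut.conj_inv_apply,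
      map_mul, map_inv, this, hconj, QuotientGroup.mk'_apply]
    group
  · rintro ⟨σ, hσ⟩
    refine ⟨σ, fun g => ?_, 1, one_mem _, fun g => by rw [hσ]; group⟩
    rw [hG32, hσ, hs]
end

section
/- Let (A_i)_{i∈I} be an inverse system, indexed by a directed set I, of profinite (compact Hausdorff) abelian groups with continuous action of G = Z/2 and surjective transition maps. Then the natural map H^1(G, lim_i A_i) → lim_i H^1(G, A_i) is an isomorphism. -/
/-- Auxiliary compactness lemma: an inverse system of nonempty closed subsets
of a directed inverse system of compact Hausdorff spaces admits a compatible
section. -/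
theorem exists_compatible_section_aux
    (I : Type*) [Preorder I] [IsDirected I (· ≤ ·)] [Nonempty I]
    (A : I → Type*) [∀ i, AddCommGroup (A i)] [∀ i, TopologicalSpace (A i)]
    [∀ i, IsTopologicalAddGroup (A i)] [∀ i, CompactSpace (A i)] [∀ i, T2Space (A i)]
    (f : ∀ i j, i ≤ j → (A j →+ A i))
    (hf_cont : ∀ i j (h : i ≤ j), Continuous (f i j h))
    (hf_comp : ∀ i j k (hij : i ≤ j) (hjk : j ≤ k) (a : A k),
      f i j hij (f j k hjk a) = f i k (le_trans hij hjk) a)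
    (S : ∀ i, Set (A i)) (hne : ∀ i, (S i).Nonempty)
    (hclosed : ∀ i, IsClosed (S i))
    (hmap : ∀ i j (h : i ≤ j), Set.MapsTo (f i j h) (S j) (S i)) :
    ∃ x : ∀ i, A i, (∀ i j (h : i ≤ j), f i j h (x j) = x i) ∧ ∀ i, x i ∈ S i := by
  classical
  set K : Set (∀ i, A i) := Set.univ.pi S with hK
  have hKc : IsCompact K := isCompact_univ_pi (fun i => (hclosed i).isCompact)
  let P := {p : I × I // p.1 ≤ p.2}
  let Z : P → Set (∀ i, A i) := fun p => {u | f p.1.1 p.1.2 p.2 (u p.1.2) = u p.1.1}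
  have hZc : ∀ p, IsClosed (Z p) := fun p =>
    isClosed_eq ((hf_cont _ _ _).comp (continuous_apply _)) (continuous_apply _)
  have hne' : (K ∩ ⋂ p, Z p).Nonempty := by
    rw [Set.nonempty_iff_ne_empty]
    intro hemp
    obtain ⟨t, ht⟩ := hKc.elim_finite_subfamily_closed Z hZc hemp
    obtain ⟨k, hk⟩ := (t.image (fun p : P => p.1.2)).exists_le
    obtain ⟨s, hs⟩ := hne k
    set u : ∀ i, A i := fun j => if h : j ≤ k then f j k h s else (hne j).choose with hu_def
    have hu : u ∈ K ∩ ⋂ p ∈ t, Z p := by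
      constructor
      · intro j _
        by_cases h : j ≤ k
        · simpa [hu_def, h] using hmap j k h hs
        · simpa [hu_def, h] using (hne j).choose_spec
      · simp only [Set.mem_iInter]
        intro p hp
        have h2 : p.1.2 ≤ k := hk _ (Finset.mem_image_of_mem _ hp)
        have h1 : p.1.1 ≤ k := le_trans p.2 h2
        simp only [Z, Set.mem_setOf_eq, hu_def, dif_pos h1, dif_pos h2]
        exact hf_comp _ _ _ p.2 h2 s
    rw [ht] at hu
    exact hu
  obtain ⟨x, hxK, hxZ⟩ := hne'
  refine ⟨x, ?_, fun i => hxK i (Set.mem_univ i)⟩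
  intro i j h
  exact Set.mem_iInter.mp hxZ ⟨(i, j), h⟩

theorem H1_of_inverse_limit
    (I : Type*) [Preorder I] [IsDirected I (· ≤ ·)] [Nonempty I]
    (A : I → Type*) [∀ i, AddCommGroup (A i)] [∀ i, TopologicalSpace (A i)]
    [∀ i, IsTopologicalAddGroup (A i)] [∀ i, CompactSpace (A i)] [∀ i, T2Space (A i)]
    (f : ∀ i j, i ≤ j → (A j →+ A i))
    (hf_cont : ∀ i j (h : i ≤ j), Continuous (f i j h))
    (hf_surj : ∀ i j (h : i ≤ j), Function.Surjective (f i j h))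
    (hf_id : ∀ i (h : i ≤ i) (a : A i), f i i h a = a)
    (hf_comp : ∀ i j k (hij : i ≤ j) (hjk : j ≤ k) (a : A k),
      f i j hij (f j k hjk a) = f i k (le_trans hij hjk) a)
    (τ : ∀ i, A i →+ A i)
    (hτ_cont : ∀ i, Continuous (τ i))
    (hτ_inv : ∀ i (a : A i), τ i (τ i a) = a)
    (hτf : ∀ i j (h : i ≤ j) (a : A j), τ i (f i j h a) = f i j h (τ j a)) :
    -- injectivity
    (∀ x : ∀ i, A i,
      (∀ i j (h : i ≤ j), f i j h (x j) = x i) →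
      (∀ i, x i + τ i (x i) = 0) →
      (∀ i, ∃ y : A i, x i = y - τ i y) →
      ∃ Y : ∀ i, A i, (∀ i j (h : i ≤ j), f i j h (Y j) = Y i) ∧
        ∀ i, x i = Y i - τ i (Y i)) ∧
    -- surjectivity
    (∀ c : ∀ i, A i,
      (∀ i, c i + τ i (c i) = 0) →
      (∀ i j (h : i ≤ j), ∃ b : A i, f i j h (c j) - c i = b - τ i b) →
      ∃ x : ∀ i, A i, (∀ i j (h : i ≤ j), f i j h (x j) = x i) ∧
        (∀ i, x i + τ i (x i) = 0) ∧
        ∀ i, ∃ b : A i, x i - c i = b - τ i b) := by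
  constructor
  · -- injectivity
    intro x hcomp _hanti hbd
    set S : ∀ i, Set (A i) := fun i => {y | x i = y - τ i y} with hS
    have hne : ∀ i, (S i).Nonempty := fun i => (hbd i).imp (fun y hy => hy)
    have hclosed : ∀ i, IsClosed (S i) := fun i =>
      isClosed_eq continuous_const (continuous_id.sub (hτ_cont i))
    have hmap : ∀ i j (h : i ≤ j), Set.MapsTo (f i j h) (S j) (S i) := by
      intro i j h y hy
      simp only [hS, Set.mem_setOf_eq] at hy ⊢
      rw [← hcomp i j h, hy, map_sub, hτf]
    obtain ⟨Y, hYcomp, hYS⟩ := exists_compatible_section_aux I A f hf_cont hf_comp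
      S hne hclosed hmap
    exact ⟨Y, hYcomp, hYS⟩
  · -- surjectivity
    intro c hanti hcb
    set S : ∀ i, Set (A i) := fun i =>
      {a | a + τ i a = 0} ∩ ((fun a => a - c i) ⁻¹' Set.range (fun b => b - τ i b)) with hS
    have hne : ∀ i, (S i).Nonempty := by
      intro i
      refine ⟨c i, hanti i, ⟨0, ?_⟩⟩
      simp
    have hclosed : ∀ i, IsClosed (S i) := by
      intro i
      refine IsClosed.inter (isClosed_eq (continuous_id.add (hτ_cont i)) continuous_const) ?_
      exact (isCompact_range (continuous_id.sub (hτ_cont i))).isClosed.preimage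
        (continuous_id.sub continuous_const)
    have hmap : ∀ i j (h : i ≤ j), Set.MapsTo (f i j h) (S j) (S i) := by
      intro i j h a ha
      obtain ⟨hker, b, hb⟩ := ha
      simp only [Set.mem_setOf_eq] at hker
      simp only [Set.mem_preimage, Set.mem_range] at hb
      obtain ⟨b', hb'⟩ := hcb i j h
      constructor
      · show f i j h a + τ i (f i j h a) = 0
        rw [hτf, ← map_add, hker, map_zero]
      · refine ⟨f i j h b + b', ?_⟩
        have h1 : f i j h a - f i j h (c j) = f i j h b - τ i (f i j h b) := by
          rw [hτf, ← map_sub, ← map_sub, hb]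
        show (f i j h b + b') - τ i (f i j h b + b') = f i j h a - c i
        have h2 : f i j h a - c i = (f i j h a - f i j h (c j)) + (f i j h (c j) - c i) := by
          abel
        rw [h2, h1, hb', map_add]
        abel
    obtain ⟨x, hxcomp, hxS⟩ := exists_compatible_section_aux I A f hf_cont hf_comp
      S hne hclosed hmap
    refine ⟨x, hxcomp, fun i => (hxS i).1, fun i => ?_⟩
    obtain ⟨b, hb⟩ := (hxS i).2
    exact ⟨b, hb.symm⟩
end

section
/- Let T = V/L be a compact (or more generally Lie) abelian group quotient of a finite-dimensional real vector space V by a lattice L, equipped with an involution τ acting R-linearly on V preserving L. Then (1+τ)T equals the identity component T(R)^0 of the fixed-point group T^τ, and consequently π_0(T^τ) ≅ Ĥ^0(Z/2, T) ≅ Ĥ^1(Z/2, L) canonically. -/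
noncomputable section

variable {V : Type*} [NormedAddCommGroup V] [NormedSpace ℝ V]
  [FiniteDimensional ℝ V]

/-- Let `T = V/L` be the quotient of a finite-dimensional real
vector space `V` by a lattice `L` (a discrete subgroup spanning `V`), with an
involution `τ` acting `ℝ`-linearly on `V` and preserving `L`.  Let `τT` be the
induced involution on `T`, and `Fix = ker(1−τT)` the fixed-point subgroup.
Then:
* `(1+τ)T` equals the identity component of `Fix = T^τ`;
* consequently `π₀(T^τ) ≅ Ĥ⁰(ℤ/2, T)` (the fixed points modulo norms,
  realized by the tautological map on connected components);
* and `Ĥ⁰(ℤ/2, T) ≅ Ĥ¹(ℤ/2, L) = ker(1+τ|L)/im(1−τ|L)` via the connecting map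
  of `0 → L → V → T → 0`, which sends the class of a fixed point `t = mk v`
  to the class of the element `a ∈ L` with `a = v − τ v`. -/
theorem real_torus_fixed_points
    (L : AddSubgroup V) [DiscreteTopology L]
    (hspan : Submodule.span ℝ (L : Set V) = ⊤)
    (τ : V →ₗ[ℝ] V) (hτ : ∀ v, τ (τ v) = v)
    (hτL : ∀ v ∈ L, τ v ∈ L)
    -- the induced involution on `T = V ⧸ L`
    (τT : V ⧸ L →+ V ⧸ L)
    (hτT : ∀ v : V, τT (QuotientAddGroup.mk v) = QuotientAddGroup.mk (τ v))
    -- the fixed subgroup `T^τ = ker(1 − τT)`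
    (Fix : AddSubgroup (V ⧸ L)) (hFix : ∀ t, t ∈ Fix ↔ τT t = t)
    -- the involution on `L`
    (τL : L →+ L) (hτL' : ∀ a : L, (τL a : V) = τ (a : V)) :
    -- (1) `(1+τ)T` is the identity component of the fixed-point group
    (Set.range (fun t : V ⧸ L => t + τT t) =
      Subtype.val '' (connectedComponent (0 : Fix))) ∧
    -- (2) `π₀(T^τ) ≅ Ĥ⁰(ℤ/2, T) = Fix / (1+τ)T`
    (∃ e : ConnectedComponents Fix ≃
        Fix ⧸ ((AddMonoidHom.range (AddMonoidHom.id (V ⧸ L) + τT)).addSubgroupOf Fix),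
      ∀ t : Fix, e (ConnectedComponents.mk t) = QuotientAddGroup.mk t) ∧
    -- (3) `Ĥ⁰(ℤ/2, T) ≅ Ĥ¹(ℤ/2, L)` via the connecting homomorphism
    (∃ f : (Fix ⧸ ((AddMonoidHom.range (AddMonoidHom.id (V ⧸ L) + τT)).addSubgroupOf Fix)) ≃
        ((AddMonoidHom.ker (AddMonoidHom.id L + τL)) ⧸
          ((AddMonoidHom.range (AddMonoidHom.id L - τL)).addSubgroupOf
            (AddMonoidHom.ker (AddMonoidHom.id L + τL)))),
      ∀ (t : Fix) (v : V) (hv : (QuotientAddGroup.mk v : V ⧸ L) = (t : V ⧸ L))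
        (a : L) (ha : (a : V) = v - τ v)
        (hmem : a ∈ AddMonoidHom.ker (AddMonoidHom.id L + τL)),
        f (QuotientAddGroup.mk t) = QuotientAddGroup.mk ⟨a, hmem⟩) := by
  classical
  -- basic continuity facts
  have τcont : Continuous τ := τ.continuous_of_finiteDimensional
  have mkcont : Continuous (QuotientAddGroup.mk : V → V ⧸ L) :=
    (QuotientAddGroup.isQuotientMap_mk L).continuous
  have τTcont : Continuous τT := by
    rw [(QuotientAddGroup.isQuotientMap_mk L).continuous_iff]
    have h : (τT ∘ (QuotientAddGroup.mk : V → V ⧸ L)) =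
        (QuotientAddGroup.mk : V → V ⧸ L) ∘ τ := funext fun v => hτT v
    rw [h]
    exact mkcont.comp τcont
  have hτT2 : ∀ t : V ⧸ L, τT (τT t) = t := by
    intro t
    refine QuotientAddGroup.induction_on t fun v => ?_
    rw [hτT, hτT, hτ]
  set f : V ⧸ L → V ⧸ L := fun t => t + τT t with hf
  have hfFix : ∀ t, f t ∈ Fix := by
    intro t
    rw [hFix]
    simp only [hf, map_add, hτT2, add_comm]
  have hhalf : ∀ w : V, ((2:ℝ)⁻¹ • w) + ((2:ℝ)⁻¹ • w) = w := by
    intro w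
    rw [← add_smul]
    norm_num
  have hmk_half : ∀ w : V, τ w = w →
      f (QuotientAddGroup.mk ((2:ℝ)⁻¹ • w)) = QuotientAddGroup.mk w := by
    intro w hw
    show (QuotientAddGroup.mk ((2:ℝ)⁻¹ • w) : V ⧸ L) + τT (QuotientAddGroup.mk ((2:ℝ)⁻¹ • w))
        = QuotientAddGroup.mk w
    rw [hτT, map_smul, hw, ← QuotientAddGroup.mk_add, hhalf]
  -- the image of the τ-fixed vectors in the torus
  set M : AddSubgroup (V ⧸ L) :=
    { carrier := QuotientAddGroup.mk '' {v : V | τ v = v}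
      zero_mem' := ⟨0, by simp, rfl⟩
      add_mem' := by
        rintro _ _ ⟨a, (ha : τ a = a), rfl⟩ ⟨b, (hb : τ b = b), rfl⟩
        exact ⟨a + b, by simp [map_add, ha, hb], by rw [QuotientAddGroup.mk_add]⟩
      neg_mem' := by
        rintro _ ⟨a, (ha : τ a = a), rfl⟩
        exact ⟨-a, by simp [ha], by rw [QuotientAddGroup.mk_neg]⟩ } with hM
  have hMmem : ∀ x : V ⧸ L, x ∈ M ↔ ∃ w : V, τ w = w ∧ QuotientAddGroup.mk w = x := by
    intro x
    constructor
    · rintro ⟨w, hw, rfl⟩; exact ⟨w, hw, rfl⟩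
    · rintro ⟨w, hw, rfl⟩; exact ⟨w, hw, rfl⟩
  have hMrange : ∀ x ∈ M, x ∈ Set.range f := by
    intro x hx
    obtain ⟨w, hw, rfl⟩ := (hMmem x).1 hx
    exact ⟨QuotientAddGroup.mk ((2:ℝ)⁻¹ • w), hmk_half w hw⟩
  have hMFix : ∀ x ∈ M, x ∈ Fix := by
    intro x hx
    obtain ⟨w, hw, rfl⟩ := (hMmem x).1 hx
    rw [hFix, hτT, hw]
  -- discreteness of L gives a δ
  obtain ⟨δ, hδpos, hδ⟩ : ∃ δ > 0, ∀ x ∈ L, ‖x‖ < δ → x = 0 := by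
    have h0 : IsOpen ({0} : Set L) := isOpen_discrete _
    rw [isOpen_induced_iff] at h0
    obtain ⟨U, hU, hU0⟩ := h0
    have h0U : (0 : V) ∈ U := by
      have : (⟨0, L.zero_mem⟩ : L) ∈ (Subtype.val ⁻¹' U : Set L) := by
        rw [hU0]; rfl
      exact this
    obtain ⟨δ, hδpos, hball⟩ := Metric.isOpen_iff.1 hU 0 h0U
    refine ⟨δ, hδpos, fun x hx hxδ => ?_⟩
    have hmem : (⟨x, hx⟩ : L) ∈ (Subtype.val ⁻¹' U : Set L) := by
      apply hball
      simpa [Metric.mem_ball, dist_zero_right] using hxδ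
    rw [hU0] at hmem
    exact congrArg Subtype.val hmem
  -- continuity of τ - id gives an ε
  obtain ⟨ε, hεpos, hε⟩ : ∃ ε > 0, ∀ v : V, ‖v‖ < ε → ‖τ v - v‖ < δ := by
    have hsub : Continuous (fun v : V => τ v - v) := τcont.sub continuous_id
    obtain ⟨ε, hεpos, hball⟩ := Metric.continuousAt_iff.1 (hsub.continuousAt (x := 0)) δ hδpos
    refine ⟨ε, hεpos, fun v hv => ?_⟩
    have := hball (show dist v 0 < ε by simpa [dist_zero_right] using hv)
    simpa [dist_zero_right, map_zero] using this
  -- the subgroup of Fix corresponding to M, and its clopenness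
  set S : AddSubgroup Fix := M.addSubgroupOf Fix with hS
  have hSmem : ∀ u : Fix, u ∈ S ↔ (u : V ⧸ L) ∈ M := fun u => Iff.rfl
  have hSnhds : (S : Set Fix) ∈ nhds (0 : Fix) := by
    have hO : IsOpen (QuotientAddGroup.mk '' Metric.ball (0:V) ε : Set (V ⧸ L)) :=
      QuotientAddGroup.isOpenMap_coe _ Metric.isOpen_ball
    have key : ∀ u : Fix, (u : V ⧸ L) ∈ (QuotientAddGroup.mk '' Metric.ball (0:V) ε) → u ∈ S := by
      rintro u ⟨v, hv, hvu⟩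
      have hvnorm : ‖v‖ < ε := by simpa [Metric.mem_ball, dist_zero_right] using hv
      have hτTvu : τT (u : V ⧸ L) = u := (hFix _).1 u.2
      have hLmem : τ v - v ∈ L := by
        have h1 : (QuotientAddGroup.mk (τ v) : V ⧸ L) = QuotientAddGroup.mk v := by
          rw [← hτT, hvu, hτTvu]
        have := (QuotientAddGroup.eq (s := L)).1 h1
        have h2 := L.neg_mem this
        simpa [neg_add_rev, sub_eq_add_neg, add_comm] using h2
      have : τ v - v = 0 := hδ _ hLmem (hε v hvnorm)
      have hτv : τ v = v := sub_eq_zero.1 this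
      exact (hSmem u).2 (by rw [hMmem]; exact ⟨v, hτv, hvu⟩)
    refine mem_nhds_iff.2 ⟨Subtype.val ⁻¹' (QuotientAddGroup.mk '' Metric.ball (0:V) ε),
      fun u hu => key u hu, continuous_subtype_val.isOpen_preimage _ hO, ?_⟩
    exact ⟨0, Metric.mem_ball_self hεpos, by simp⟩
  have hSopen : IsOpen (S : Set Fix) := AddSubgroup.isOpen_of_mem_nhds S hSnhds
  have hSclopen : IsClopen (S : Set Fix) :=
    ⟨AddSubgroup.isClosed_of_isOpen S hSopen, hSopen⟩
  -- Part (1)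
  have part1 : Set.range f = Subtype.val '' (connectedComponent (0 : Fix)) := by
    apply Set.Subset.antisymm
    · -- range of f is connected, contains 0, lives inside Fix
      set g : V ⧸ L → Fix := fun t => ⟨f t, hfFix t⟩ with hg
      have hgcont : Continuous g :=
        Continuous.subtype_mk (continuous_id.add τTcont) _
      have hrange_eq : Set.range g = Set.range (g ∘ (QuotientAddGroup.mk : V → V ⧸ L)) := by
        rw [Set.range_comp, (QuotientAddGroup.mk_surjective (s := L)).range_eq, Set.image_univ]
      have hpc : IsPreconnected (Set.range g) := by
        rw [hrange_eq, ← Set.image_univ]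
        exact isPreconnected_univ.image _ ((hgcont.comp mkcont).continuousOn)
      have hg0 : (0 : Fix) ∈ Set.range g := by
        refine ⟨0, ?_⟩
        apply Subtype.ext
        simp [hg, hf]
      have hsub : Set.range g ⊆ connectedComponent (0 : Fix) :=
        hpc.subset_connectedComponent hg0
      rintro _ ⟨t, rfl⟩
      exact ⟨g t, hsub ⟨t, rfl⟩, rfl⟩
    · rintro _ ⟨u, hu, rfl⟩
      have hS0 : (0 : Fix) ∈ (S : Set Fix) := (hSmem 0).2 M.zero_mem
      have huS : u ∈ S := hSclopen.connectedComponent_subset hS0 hu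
      exact hMrange _ ((hSmem u).1 huS)
  -- `N`, the subgroup of norms, and its identification with the identity component
  set N : AddSubgroup Fix :=
    (AddMonoidHom.range (AddMonoidHom.id (V ⧸ L) + τT)).addSubgroupOf Fix with hN
  have hNrange : ∀ x : V ⧸ L,
      x ∈ AddMonoidHom.range (AddMonoidHom.id (V ⧸ L) + τT) ↔ x ∈ Set.range f := by
    intro x
    constructor
    · rintro ⟨t, rfl⟩; exact ⟨t, rfl⟩
    · rintro ⟨t, rfl⟩; exact ⟨t, rfl⟩
  have hNcc : ∀ u : Fix, u ∈ N ↔ u ∈ connectedComponent (0 : Fix) := by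
    intro u
    rw [hN, AddSubgroup.mem_addSubgroupOf, hNrange, part1,
      Subtype.coe_injective.mem_set_image]
  have htrans : ∀ a b : Fix, (-a + b ∈ connectedComponent (0 : Fix) ↔
      connectedComponent a = connectedComponent b) := by
    intro a b
    have himg : (Homeomorph.addLeft a) '' connectedComponent (0 : Fix) = connectedComponent a := by
      have h1 := (Homeomorph.addLeft a).image_connectedComponentIn
        (s := Set.univ) (x := (0 : Fix)) (Set.mem_univ _)
      rw [connectedComponentIn_univ, Set.image_univ,
        (Homeomorph.addLeft a).surjective.range_eq, connectedComponentIn_univ] at h1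
      simp only [Homeomorph.coe_addLeft, add_zero] at h1
      exact h1
    constructor
    · intro h
      have hb : b ∈ connectedComponent a := by
        rw [← himg]
        exact ⟨-a + b, h, by simp⟩
      exact (connectedComponent_eq_iff_mem.2 hb).symm
    · intro h
      have hb : b ∈ connectedComponent a := h ▸ mem_connectedComponent
      rw [← himg] at hb
      obtain ⟨z, hz, hzb⟩ := hb
      have hzab : z = -a + b := by
        have h2 : a + z = b := hzb
        rw [← h2]; abel
      rwa [← hzab]
  -- Part (3) data: the connecting homomorphism
  set K : AddSubgroup L := AddMonoidHom.ker (AddMonoidHom.id L + τL) with hK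
  set I' : AddSubgroup K := (AddMonoidHom.range (AddMonoidHom.id L - τL)).addSubgroupOf K with hI'
  have hKmem : ∀ a : L, a ∈ K ↔ τ (a : V) = -(a : V) := by
    intro a
    rw [hK, AddMonoidHom.mem_ker]
    constructor
    · intro h
      have h2 := congrArg (Subtype.val) h
      simp only [AddMonoidHom.add_apply, AddMonoidHom.id_apply, AddSubgroup.coe_add, hτL',
        AddSubgroup.coe_zero] at h2
      exact eq_neg_of_add_eq_zero_right h2
    · intro h
      apply Subtype.ext
      simp [hτL', h]
  have hψmem : ∀ a : K, (QuotientAddGroup.mk ((2:ℝ)⁻¹ • (((a : L)) : V)) : V ⧸ L) ∈ Fix := by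
    intro a
    rw [hFix, hτT, map_smul, (hKmem (a : L)).1 a.2, QuotientAddGroup.eq,
      show -((2:ℝ)⁻¹ • -(((a : L)) : V)) + (2:ℝ)⁻¹ • (((a : L)) : V) = (((a : L)) : V) by module]
    exact (a : L).2
  set ψhom : K →+ Fix ⧸ N := AddMonoidHom.mk'
    (fun a => QuotientAddGroup.mk
      (⟨QuotientAddGroup.mk ((2:ℝ)⁻¹ • (((a : L)) : V)), hψmem a⟩ : Fix))
    (by
      intro a b
      show QuotientAddGroup.mk
          (⟨QuotientAddGroup.mk ((2:ℝ)⁻¹ • ((((a + b : K) : L)) : V)), hψmem (a + b)⟩ : Fix)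
          = QuotientAddGroup.mk (⟨QuotientAddGroup.mk ((2:ℝ)⁻¹ • (((a : L)) : V)), hψmem a⟩ : Fix)
            + QuotientAddGroup.mk (⟨QuotientAddGroup.mk ((2:ℝ)⁻¹ • (((b : L)) : V)), hψmem b⟩ : Fix)
      rw [← QuotientAddGroup.mk_add]
      congr 1
      apply Subtype.ext
      show (QuotientAddGroup.mk ((2:ℝ)⁻¹ • ((((a + b : K) : L)) : V)) : V ⧸ L)
          = QuotientAddGroup.mk ((2:ℝ)⁻¹ • (((a : L)) : V))
            + QuotientAddGroup.mk ((2:ℝ)⁻¹ • (((b : L)) : V))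
      rw [← QuotientAddGroup.mk_add, ← smul_add]
      norm_cast) with hψhom
  have hlift : I' ≤ AddMonoidHom.ker ψhom := by
    intro k hk
    rw [AddMonoidHom.mem_ker]
    obtain ⟨l, hl⟩ := AddSubgroup.mem_addSubgroupOf.1 hk
    have hlv : ((l : V)) - τ (l : V) = (((k : L)) : V) := by
      have h2 := congrArg Subtype.val hl
      simpa [AddMonoidHom.sub_apply, AddMonoidHom.id_apply, AddSubgroup.coe_sub, hτL'] using h2
    show QuotientAddGroup.mk _ = 0
    rw [QuotientAddGroup.eq_zero_iff, AddSubgroup.mem_addSubgroupOf]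
    refine ⟨QuotientAddGroup.mk ((2:ℝ)⁻¹ • (l : V)), ?_⟩
    show (QuotientAddGroup.mk ((2:ℝ)⁻¹ • (l : V)) : V ⧸ L)
        + τT (QuotientAddGroup.mk ((2:ℝ)⁻¹ • (l : V)))
        = QuotientAddGroup.mk ((2:ℝ)⁻¹ • (((k : L)) : V))
    rw [hτT, map_smul, ← QuotientAddGroup.mk_add, QuotientAddGroup.eq, ← hlv,
      show -((2:ℝ)⁻¹ • (l : V) + (2:ℝ)⁻¹ • τ (l : V))
          + (2:ℝ)⁻¹ • ((l : V) - τ (l : V)) = -(τ (l : V)) by module]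
    exact L.neg_mem (hτL' l ▸ (τL l).2)
  have hψspec : ∀ (t : Fix) (v : V), (QuotientAddGroup.mk v : V ⧸ L) = (t : V ⧸ L) →
      ∀ (a : L), ((a : V) = v - τ v) → ∀ hm : a ∈ K,
      QuotientAddGroup.lift I' ψhom hlift (QuotientAddGroup.mk ⟨a, hm⟩)
        = QuotientAddGroup.mk t := by
    intro t v hv a ha hm
    rw [QuotientAddGroup.lift_mk]
    show QuotientAddGroup.mk _ = QuotientAddGroup.mk t
    rw [QuotientAddGroup.eq, AddSubgroup.mem_addSubgroupOf]
    refine ⟨QuotientAddGroup.mk ((2:ℝ)⁻¹ • v), ?_⟩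
    show (QuotientAddGroup.mk ((2:ℝ)⁻¹ • v) : V ⧸ L)
        + τT (QuotientAddGroup.mk ((2:ℝ)⁻¹ • v)) = _
    rw [hτT, map_smul, ← QuotientAddGroup.mk_add, AddSubgroup.coe_add, AddSubgroup.coe_neg,
      ← hv]
    show _ = -(QuotientAddGroup.mk ((2:ℝ)⁻¹ • ((a : L) : V)) : V ⧸ L) + QuotientAddGroup.mk v
    rw [← QuotientAddGroup.mk_neg, ← QuotientAddGroup.mk_add]
    exact congrArg _ (by rw [ha]; module)
  have hinj : Function.Injective (QuotientAddGroup.lift I' ψhom hlift) := by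
    rw [injective_iff_map_eq_zero]
    intro x
    refine QuotientAddGroup.induction_on x ?_
    intro k hk
    rw [QuotientAddGroup.lift_mk] at hk
    have hk2 : (⟨QuotientAddGroup.mk ((2:ℝ)⁻¹ • (((k : L)) : V)), hψmem k⟩ : Fix) ∈ N := by
      rw [← QuotientAddGroup.eq_zero_iff]
      exact hk
    obtain ⟨s, hs⟩ := AddSubgroup.mem_addSubgroupOf.1 hk2
    obtain ⟨u, rfl⟩ := QuotientAddGroup.mk_surjective s
    have hs2 : (QuotientAddGroup.mk (u + τ u) : V ⧸ L)
        = QuotientAddGroup.mk ((2:ℝ)⁻¹ • (((k : L)) : V)) := by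
      rw [QuotientAddGroup.mk_add, ← hτT]
      exact hs
    have hl : -(u + τ u) + (2:ℝ)⁻¹ • (((k : L)) : V) ∈ L := (QuotientAddGroup.eq).1 hs2
    have hka : τ (((k : L)) : V) = -(((k : L)) : V) := (hKmem _).1 k.2
    have hτlv : τ (-(u + τ u) + (2:ℝ)⁻¹ • (((k : L)) : V))
        = -(τ u + u) + (2:ℝ)⁻¹ • (-(((k : L)) : V)) := by
      simp only [map_add, map_neg, map_smul, hτ, hka]
    have hkI : k ∈ I' := by
      rw [hI', AddSubgroup.mem_addSubgroupOf]
      refine ⟨⟨-(u + τ u) + (2:ℝ)⁻¹ • (((k : L)) : V), hl⟩, ?_⟩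
      apply Subtype.ext
      rw [AddMonoidHom.sub_apply, AddMonoidHom.id_apply, AddSubgroup.coe_sub, hτL']
      show (-(u + τ u) + (2:ℝ)⁻¹ • (((k : L)) : V))
          - τ (-(u + τ u) + (2:ℝ)⁻¹ • (((k : L)) : V)) = (((k : L)) : V)
      rw [hτlv]
      module
    exact (QuotientAddGroup.eq_zero_iff k).2 hkI
  have hsurj : Function.Surjective (QuotientAddGroup.lift I' ψhom hlift) := by
    intro x
    refine QuotientAddGroup.induction_on x ?_
    intro t
    obtain ⟨v, hv⟩ := QuotientAddGroup.mk_surjective ((t : V ⧸ L))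
    have h1 : (QuotientAddGroup.mk (τ v) : V ⧸ L) = QuotientAddGroup.mk v := by
      rw [← hτT, hv]
      exact (hFix _).1 t.2
    have hLmem : v - τ v ∈ L := by
      have h2 := (QuotientAddGroup.eq).1 h1
      simpa [sub_eq_neg_add] using h2
    have hm : (⟨v - τ v, hLmem⟩ : L) ∈ K := by
      rw [hKmem]
      show τ (v - τ v) = -(v - τ v)
      rw [map_sub, hτ, neg_sub]
    exact ⟨QuotientAddGroup.mk ⟨⟨v - τ v, hLmem⟩, hm⟩, hψspec t v hv _ rfl hm⟩
  refine ⟨part1, ?_, ?_⟩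
  · refine ⟨Quotient.congr (Equiv.refl Fix) (fun a b => ?_), fun t => rfl⟩
    show connectedComponent a = connectedComponent b ↔ (QuotientAddGroup.leftRel N) a b
    rw [QuotientAddGroup.leftRel_apply]
    exact ((hNcc _).trans (htrans a b)).symm
  · refine ⟨(Equiv.ofBijective _ ⟨hinj, hsurj⟩).symm, ?_⟩
    intro t v hv a ha hmem
    rw [Equiv.symm_apply_eq]
    exact (hψspec t v hv a ha hmem).symm

end
end
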